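/- Let A = {A_1, ..., A_D} be a set of n×n matrices over a field F that is a τ-dimension expander (τ > 0), is closed under taking transpose (for every i there is j with A_j = A_iᵀ), and contains the identity matrix. Let 0 < ε < 1 and let t be an integer with t > 3·log₂(1/ε)/τ. Then the family A^(t) consisting of all products of t matrices from A is (εn, (1−ε)n)-dimension-spreading: for every subspace U ⊆ F^n with dim(U) ≥ εn, we have dim(Σ_{B ∈ A^(t)} B(U)) ≥ (1−ε)n. -/

import Mathlib

open Matrix

/-- The family `A₁, …, A_D` is a `τ`-dimension expander. -/
def DimExpander {F : Type*} [Field F] {D n : ℕ}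
    (A : Fin D → Matrix (Fin n) (Fin n) F) (τ : ℝ) : Prop :=
  ∀ U : Submodule F (Fin n → F), 2 * Module.finrank F U ≤ n →
    (1 + τ) * (Module.finrank F U : ℝ) ≤
      (Module.finrank F ↥(⨆ i, U.map (A i).mulVecLin) : ℝ)

/-- The product of the `t` matrices `A (w 0), A (w 1), …, A (w (t-1))` given by the
word `w`. -/
def wordProd {F : Type*} [Field F] {D n : ℕ}
    (A : Fin D → Matrix (Fin n) (Fin n) F) {t : ℕ} (w : Fin t → Fin D) :
    Matrix (Fin n) (Fin n) F :=
  (List.ofFn fun j => A (w j)).prod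

set_option maxHeartbeats 1000000

section Aux

variable {F : Type*} [Field F] {D n : ℕ} (A : Fin D → Matrix (Fin n) (Fin n) F)

/-- The subspace spanned by all images of `U` under products of `s` matrices from `A`. -/
def dsW (U : Submodule F (Fin n → F)) (s : ℕ) : Submodule F (Fin n → F) :=
  ⨆ w : Fin s → Fin D, U.map (wordProd A w).mulVecLin

lemma wordProd_cons {t : ℕ} (i : Fin D) (w : Fin t → Fin D) :
    wordProd A (Fin.cons i w) = A i * wordProd A w := by
  simp [wordProd, List.ofFn_succ]

lemma dsW_zero (U : Submodule F (Fin n → F)) : dsW A U 0 = U := by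
  haveI : Nonempty (Fin 0 → Fin D) := ⟨Fin.elim0⟩
  have h : ∀ w : Fin 0 → Fin D, U.map (wordProd A w).mulVecLin = U := by
    intro w
    simp [wordProd, List.ofFn_zero, Matrix.mulVecLin_one, Submodule.map_id]
  simp only [dsW, h, iSup_const]

lemma dsW_succ (U : Submodule F (Fin n → F)) (s : ℕ) :
    dsW A U (s + 1) = ⨆ i, (dsW A U s).map (A i).mulVecLin := by
  apply le_antisymm
  · refine iSup_le fun w => ?_
    have h : wordProd A w = A (w 0) * wordProd A (Fin.tail w) := by
      have := wordProd_cons A (w 0) (Fin.tail w)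
      rwa [Fin.cons_self_tail] at this
    rw [h, Matrix.mulVecLin_mul, Submodule.map_comp]
    refine le_trans (Submodule.map_mono ?_)
      (le_iSup (fun i => (dsW A U s).map (A i).mulVecLin) (w 0))
    exact le_iSup (fun w' : Fin s → Fin D => U.map (wordProd A w').mulVecLin) (Fin.tail w)
  · refine iSup_le fun i => ?_
    rw [dsW, Submodule.map_iSup]
    refine iSup_le fun w => ?_
    rw [← Submodule.map_comp, ← Matrix.mulVecLin_mul, ← wordProd_cons]
    exact le_iSup (fun w' : Fin (s+1) → Fin D => U.map (wordProd A w').mulVecLin) (Fin.cons i w)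

lemma dsW_mono (hid : ∃ i, A i = 1) (U : Submodule F (Fin n → F)) :
    Monotone (dsW A U) := by
  obtain ⟨i₀, hi₀⟩ := hid
  refine monotone_nat_of_le_succ fun s => ?_
  rw [dsW_succ]
  have h : dsW A U s = (dsW A U s).map (A i₀).mulVecLin := by
    rw [hi₀, Matrix.mulVecLin_one, Submodule.map_id]
  exact h.le.trans (le_iSup (fun i => (dsW A U s).map (A i).mulVecLin) i₀)

lemma toDual_apply_dot (y x : Fin n → F) :
    (Pi.basisFun F (Fin n)).toDual y x = y ⬝ᵥ x := by
  have hx : x = ∑ i, x i • Pi.basisFun F (Fin n) i := by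
    ext j; simp [Pi.basisFun_apply, Finset.sum_apply, Pi.single_apply]
  conv_lhs => rw [hx]
  rw [map_sum]
  simp only [LinearMap.map_smul, smul_eq_mul, Module.Basis.toDual_apply_left, Pi.basisFun_repr,
    dotProduct]
  exact Finset.sum_congr rfl fun i _ => mul_comm _ _

/-- The orthogonal complement of `W` with respect to the dot product. -/
noncomputable def dsO (W : Submodule F (Fin n → F)) : Submodule F (Fin n → F) :=
  W.dualAnnihilator.comap (Module.Basis.toDual (Pi.basisFun F (Fin n)))

lemma mem_dsO {W : Submodule F (Fin n → F)} {y : Fin n → F} :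
    y ∈ dsO W ↔ ∀ x ∈ W, y ⬝ᵥ x = 0 := by
  simp [dsO, Submodule.mem_dualAnnihilator, toDual_apply_dot]

lemma finrank_dsO_add (W : Submodule F (Fin n → F)) :
    Module.finrank F (dsO W) + Module.finrank F W = n := by
  have h1 : dsO W = W.dualAnnihilator.comap
      ((Pi.basisFun F (Fin n)).toDualEquiv :
        (Fin n → F) →ₗ[F] Module.Dual F (Fin n → F)) := rfl
  have h2 : Module.finrank F (dsO W) = Module.finrank F W.dualAnnihilator := by
    rw [h1, Submodule.comap_equiv_eq_map_symm]
    exact LinearEquiv.finrank_map_eq (Pi.basisFun F (Fin n)).toDualEquiv.symm _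
  have h3 := ((Subspace.quotEquivAnnihilator W).finrank_eq :
    Module.finrank F ((Fin n → F) ⧸ W) = Module.finrank F W.dualAnnihilator)
  have h4 := Submodule.finrank_quotient_add_finrank W
  have h5 : Module.finrank F (Fin n → F) = n := by simp
  omega

end Aux

/-- If `A` is a `τ`-dimension expander closed under transpose and containing the identity,
and `t > 3·log₂(1/ε)/τ`, then the family of all products of `t` matrices from `A` is
`(εn, (1-ε)n)`-dimension-spreading. -/
theorem words_dimSpreading {F : Type*} [Field F] {D n : ℕ} (τ ε : ℝ)
    (hτ : 0 < τ) (hε : 0 < ε) (hε1 : ε < 1)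
    (A : Fin D → Matrix (Fin n) (Fin n) F)
    (hexp : DimExpander A τ)
    (htrans : ∀ i, ∃ j, A j = (A i)ᵀ)
    (hid : ∃ i, A i = 1)
    (t : ℕ) (ht : 3 * Real.logb 2 (1 / ε) / τ < t)
    (U : Submodule F (Fin n → F))
    (hU : ε * n ≤ (Module.finrank F U : ℝ)) :
    (1 - ε) * n ≤
      (Module.finrank F ↥(⨆ w : Fin t → Fin D, U.map (wordProd A w).mulVecLin) : ℝ) := by
  classical
  show (1 - ε) * n ≤ (Module.finrank F (dsW A U t) : ℝ)
  have hmono : ∀ s s' : ℕ, s ≤ s' →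
      Module.finrank F (dsW A U s) ≤ Module.finrank F (dsW A U s') :=
    fun s s' hs => Submodule.finrank_mono (dsW_mono A hid U hs)
  have hd0 : ε * n ≤ (Module.finrank F (dsW A U 0) : ℝ) := by rwa [dsW_zero]
  have hd0t : ε * n ≤ (Module.finrank F (dsW A U t) : ℝ) := by
    refine hd0.trans ?_
    exact_mod_cast hmono 0 t (Nat.zero_le t)
  -- trivial case ε ≥ 1/2
  by_cases hhalf : 1 / 2 ≤ ε
  · refine le_trans ?_ hd0t
    have : (0:ℝ) ≤ n := Nat.cast_nonneg n
    nlinarith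
  push_neg at hhalf
  -- trivial case n ≤ 1
  by_cases hn1 : n ≤ 1
  · interval_cases n
    · simpa using (Nat.cast_nonneg _ : (0:ℝ) ≤ (Module.finrank F (dsW A U t) : ℝ))
    · have h1 : (0:ℝ) < Module.finrank F (dsW A U t) := by
        refine lt_of_lt_of_le ?_ hd0t
        push_cast; nlinarith
      have h2 : 1 ≤ Module.finrank F (dsW A U t) := by exact_mod_cast h1
      have : (1:ℝ) ≤ Module.finrank F (dsW A U t) := by exact_mod_cast h2
      push_cast
      nlinarith
  push_neg at hn1
  have hn2 : 2 ≤ n := hn1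
  have hnpos : (0:ℝ) < n := by exact_mod_cast Nat.pos_of_ne_zero (by omega)
  -- τ is at most 2
  have hτ2 : τ ≤ 2 := by
    set b : Fin (n/2) → (Fin n → F) := fun i => Pi.basisFun F (Fin n) (Fin.castLE (by omega) i)
    have hli : LinearIndependent F b :=
      (Pi.basisFun F (Fin n)).linearIndependent.comp _ (Fin.castLE_injective _)
    have hrk : Module.finrank F (Submodule.span F (Set.range b)) = n / 2 := by
      rw [finrank_span_eq_card hli, Fintype.card_fin]
    have h := hexp (Submodule.span F (Set.range b)) (by rw [hrk]; omega)
    rw [hrk] at h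
    have hle : Module.finrank F
        ↥(⨆ i, (Submodule.span F (Set.range b)).map (A i).mulVecLin) ≤ n := by
      have := Submodule.finrank_le (⨆ i, (Submodule.span F (Set.range b)).map (A i).mulVecLin)
      simpa using this
    have h3 : n ≤ 3 * (n / 2) := by omega
    have hpos : 0 < (n / 2 : ℕ) := by omega
    have hposR : (0:ℝ) < (n/2 : ℕ) := by exact_mod_cast hpos
    have hleR : (Module.finrank F
        ↥(⨆ i, (Submodule.span F (Set.range b)).map (A i).mulVecLin) : ℝ)
        ≤ 3 * (n/2 : ℕ) := by exact_mod_cast hle.trans h3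
    nlinarith [h.trans hleR]
  -- choice of the half-way point s₁
  obtain ⟨s₁, h2s1, hpow⟩ : ∃ s₁ : ℕ, 2 * s₁ ≤ t ∧ 1 / (2 * ε) < (1 + τ) ^ s₁ := by
    have h2ε : 2 < 1 / ε := by rw [lt_div_iff₀ hε]; linarith
    have h1τ : (1:ℝ) < 1 + τ := by linarith
    set x := Real.logb (1 + τ) (1 / (2 * ε)) with hxdef
    refine ⟨Nat.floor x + 1, ?_, ?_⟩
    · set ℓ := Real.log (1 / ε) with hldef
      have hlog2 : (0:ℝ) < Real.log 2 := Real.log_pos (by norm_num)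
      have hlog3 : (0:ℝ) < Real.log 3 := Real.log_pos (by norm_num)
      have hℓ : Real.log 2 < ℓ := Real.log_lt_log (by norm_num) h2ε
      have hg : (0:ℝ) < Real.log (1 + τ) := Real.log_pos h1τ
      have hcc : τ / 2 * Real.log 3 ≤ Real.log (1 + τ) := by
        have h := (strictConcaveOn_log_Ioi.concaveOn).2 (Set.mem_Ioi.2 (by norm_num : (0:ℝ) < 1))
          (Set.mem_Ioi.2 (by norm_num : (0:ℝ) < 3)) (by linarith : (0:ℝ) ≤ 1 - τ/2)
          (by linarith : (0:ℝ) ≤ τ/2) (by ring)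
        simp only [smul_eq_mul, Real.log_one, mul_one, mul_zero, zero_add] at h
        have e : 1 - τ/2 + τ/2 * 3 = 1 + τ := by ring
        rw [e] at h
        linarith
      have h1627 : 4 * Real.log 2 ≤ 3 * Real.log 3 := by
        have h := Real.log_le_log (by norm_num : (0:ℝ) < 16) (by norm_num : (16:ℝ) ≤ 27)
        have e1 : (16:ℝ) = 2 ^ (4:ℕ) := by norm_num
        have e2 : (27:ℝ) = 3 ^ (3:ℕ) := by norm_num
        rw [e1, e2, Real.log_pow, Real.log_pow] at h
        push_cast at h
        linarith
      have hx_eq : x = (ℓ - Real.log 2) / Real.log (1 + τ) := by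
        rw [hxdef, Real.logb, hldef]
        congr 1
        rw [show (1 / (2*ε)) = (1/ε) / 2 by ring, Real.log_div (by positivity) (by norm_num)]
      have hL_eq : Real.logb 2 (1/ε) = ℓ / Real.log 2 := rfl
      have key : 2 * x + 1 ≤ 3 * Real.logb 2 (1/ε) / τ := by
        rw [hx_eq, hL_eq, ← sub_nonneg]
        have expand : 3*(ℓ/Real.log 2)/τ - (2*((ℓ-Real.log 2)/Real.log (1+τ))+1) =
            (3*ℓ*Real.log (1+τ) - 2*(ℓ-Real.log 2)*τ*Real.log 2 - τ*Real.log 2*Real.log (1+τ))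
              / (τ * Real.log 2 * Real.log (1+τ)) := by
          field_simp
          ring
        rw [expand]
        apply div_nonneg _ (by positivity)
        nlinarith [mul_nonneg (sub_nonneg.2 hcc) (by nlinarith : (0:ℝ) ≤ 3*ℓ - τ*Real.log 2),
          mul_nonneg (mul_nonneg hτ.le (sub_nonneg.2 hℓ.le)) (sub_nonneg.2 h1627),
          mul_nonneg (mul_nonneg (mul_nonneg hτ.le (by linarith : (0:ℝ) ≤ 3 - τ)) hlog2.le)
            hlog3.le]
      have hxpos : 0 ≤ x := by
        rw [hx_eq]
        exact div_nonneg (by linarith) hg.le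
      have hfl : (Nat.floor x : ℝ) ≤ x := Nat.floor_le hxpos
      have htR : 2 * x + 1 < (t:ℝ) := lt_of_le_of_lt key ht
      have hcast : ((2 * (Nat.floor x + 1) : ℕ) : ℝ) < (t:ℝ) + 1 := by push_cast; linarith
      have hnat : 2 * (Nat.floor x + 1) < t + 1 := by exact_mod_cast hcast
      omega
    · have hlt : x < ((Nat.floor x + 1 : ℕ) : ℝ) := by push_cast; exact Nat.lt_floor_add_one x
      have h0 : (0:ℝ) < 1 / (2*ε) := by positivity
      have heq : (1 + τ) ^ x = 1 / (2 * ε) := Real.rpow_logb (by linarith) (by linarith) h0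
      calc 1 / (2*ε) = (1+τ) ^ x := heq.symm
        _ < (1+τ) ^ ((Nat.floor x + 1 : ℕ) : ℝ) := (Real.rpow_lt_rpow_left_iff h1τ).2 hlt
        _ = (1+τ) ^ (Nat.floor x + 1 : ℕ) := by rw [Real.rpow_natCast]
  -- forward dimension growth
  have fwd : ∀ s : ℕ, (n < 2 * Module.finrank F (dsW A U s)) ∨
      ((1+τ)^s * (ε * n) ≤ (Module.finrank F (dsW A U s) : ℝ)) := by
    intro s
    induction s with
    | zero => right; rw [pow_zero, one_mul]; exact hd0
    | succ s ih =>
      by_cases hc : 2 * Module.finrank F (dsW A U s) ≤ n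
      · rcases ih with h | h
        · exact absurd hc (by omega)
        · right
          have hstep := hexp (dsW A U s) hc
          rw [← dsW_succ] at hstep
          calc (1+τ)^(s+1) * (ε*n) = (1+τ) * ((1+τ)^s * (ε*n)) := by ring
            _ ≤ (1+τ) * (Module.finrank F (dsW A U s) : ℝ) :=
                mul_le_mul_of_nonneg_left h (by linarith)
            _ ≤ _ := hstep
      · left
        have := hmono s (s+1) (Nat.le_succ s)
        omega
  -- suppose the conclusion fails
  by_contra hcon
  push_neg at hcon
  have hsum : ∀ s : ℕ,
      Module.finrank F (dsO (dsW A U s)) + Module.finrank F (dsW A U s) = n :=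
    fun s => finrank_dsO_add (dsW A U s)
  have hEt : ε * n < (Module.finrank F (dsO (dsW A U t)) : ℝ) := by
    have hc : (Module.finrank F (dsO (dsW A U t)) : ℝ)
        + (Module.finrank F (dsW A U t) : ℝ) = n := by exact_mod_cast hsum t
    nlinarith
  -- backward expansion of orthogonal complements
  have bwdstep : ∀ s : ℕ, 2 * Module.finrank F (dsO (dsW A U (s+1))) ≤ n →
      (1+τ) * (Module.finrank F (dsO (dsW A U (s+1))) : ℝ) ≤
        (Module.finrank F (dsO (dsW A U s)) : ℝ) := by
    intro s hc
    have h1 := hexp (dsO (dsW A U (s+1))) hc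
    have h2 : (⨆ j, (dsO (dsW A U (s+1))).map (A j).mulVecLin) ≤ dsO (dsW A U s) := by
      refine iSup_le fun j => ?_
      rw [Submodule.map_le_iff_le_comap]
      intro y hy
      rw [Submodule.mem_comap, mem_dsO]
      intro x hx
      obtain ⟨k, hk⟩ := htrans j
      have hx' : A k *ᵥ x ∈ dsW A U (s+1) := by
        rw [dsW_succ]
        exact le_iSup (fun i => (dsW A U s).map (A i).mulVecLin) k (Submodule.mem_map_of_mem hx)
      have he : (A j).mulVecLin y ⬝ᵥ x = y ⬝ᵥ (A k *ᵥ x) := by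
        rw [hk, Matrix.mulVecLin_apply, dotProduct_comm, dotProduct_mulVec, mulVec_transpose,
          dotProduct_comm]
      rw [he]
      exact (mem_dsO.1 hy) _ hx'
    have h3 := Submodule.finrank_mono h2
    refine h1.trans ?_
    exact_mod_cast h3
  have bwd : ∀ k : ℕ, k ≤ t → (n < 2 * Module.finrank F (dsO (dsW A U (t - k)))) ∨
      ((1+τ)^k * (ε * n) < (Module.finrank F (dsO (dsW A U (t - k))) : ℝ)) := by
    intro k
    induction k with
    | zero =>
      intro _
      right
      rw [pow_zero, one_mul, Nat.sub_zero]
      exact hEt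
    | succ k ih =>
      intro hk1
      have ihr := ih (by omega)
      by_cases hc2 : 2 * Module.finrank F (dsO (dsW A U (t - (k+1)))) ≤ n
      · right
        have heq : t - k = (t - (k+1)) + 1 := by omega
        have hanti : Module.finrank F (dsO (dsW A U (t-k)))
            ≤ Module.finrank F (dsO (dsW A U (t-(k+1)))) := by
          have h1 := hmono (t-(k+1)) (t-k) (by omega)
          have h2 := hsum (t-k); have h3 := hsum (t-(k+1)); omega
        have hc' : 2 * Module.finrank F (dsO (dsW A U (t - k))) ≤ n := by omega
        have hstep := bwdstep (t - (k+1))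
        rw [← heq] at hstep
        have hstep' := hstep hc'
        rcases ihr with h | h
        · exact absurd hc' (by omega)
        · calc (1+τ)^(k+1) * (ε*n) = (1+τ) * ((1+τ)^k * (ε*n)) := by ring
            _ < (1+τ) * (Module.finrank F (dsO (dsW A U (t-k))) : ℝ) := by
                apply mul_lt_mul_of_pos_left h (by linarith)
            _ ≤ _ := hstep'
      · left; omega
  -- the final contradiction
  have hεn : (0:ℝ) < ε * n := by positivity
  have heqhalf : 1/(2*ε) * (ε*n) = n/2 := by field_simp
  have hds1 : n < 2 * Module.finrank F (dsW A U s₁) := by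
    rcases fwd s₁ with h | h
    · exact h
    · have := mul_lt_mul_of_pos_right hpow hεn
      have hhalfR : (n:ℝ)/2 < (Module.finrank F (dsW A U s₁) : ℝ) := by
        rw [← heqhalf]
        exact lt_of_lt_of_le this h
      have : (n:ℝ) < 2 * (Module.finrank F (dsW A U s₁) : ℝ) := by linarith
      exact_mod_cast this
  have hes1 : n < 2 * Module.finrank F (dsO (dsW A U (t - s₁))) := by
    rcases bwd s₁ (by omega) with h | h
    · exact h
    · have := mul_lt_mul_of_pos_right hpow hεn
      have hhalfR : (n:ℝ)/2 < (Module.finrank F (dsO (dsW A U (t - s₁))) : ℝ) := by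
        rw [← heqhalf]
        exact lt_trans this h
      have : (n:ℝ) < 2 * (Module.finrank F (dsO (dsW A U (t - s₁))) : ℝ) := by linarith
      exact_mod_cast this
  have hm := hmono s₁ (t - s₁) (by omega)
  have h1 := hsum s₁
  have h2 := hsum (t - s₁)
  omega
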